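/- Let f ∈ ℤ_p[[x]] with f(0)=1, and write x·f'(x)/f(x) = ∑_{n=1}^∞ c_n x^n. Then all c_n lie in ℤ_p, and for every k, r ∈ ℕ one has c_{k·p^{r+1}} ≡ c_{k·p^r} (mod p^{r+1} ℤ_p). -/

import Mathlib

open PowerSeries Finset

namespace Stmt1Aux

noncomputable section

variable {R : Type*} [CommRing R]

/-- Coefficientwise substitution `x ↦ x^p`. -/
def T (p : ℕ) (f : R⟦X⟧) : R⟦X⟧ := mk fun n => if p ∣ n then coeff (n / p) f else 0

lemma coeff_T (p : ℕ) (f : R⟦X⟧) (n : ℕ) :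
    coeff n (T p f) = if p ∣ n then coeff (n / p) f else 0 := coeff_mk _ _

lemma constantCoeff_T (p : ℕ) (f : R⟦X⟧) :
    constantCoeff (T p f) = constantCoeff f := by
  rw [← coeff_zero_eq_constantCoeff, coeff_T, if_pos (dvd_zero p), Nat.zero_div]

lemma T_map {S : Type*} [CommRing S] (φ : R →+* S) (p : ℕ) (f : R⟦X⟧) :
    PowerSeries.map φ (T p f) = T p (PowerSeries.map φ f) := by
  ext n
  rw [coeff_map, coeff_T, coeff_T, apply_ite φ, map_zero, coeff_map]

lemma T_mul (p : ℕ) (hp : 0 < p) (a b : R⟦X⟧) : T p (a * b) = T p a * T p b := by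
  ext n
  have hsum : ∀ x ∈ antidiagonal n,
      coeff x.1 (T p a) * coeff x.2 (T p b) =
        if p ∣ x.1 ∧ p ∣ x.2 then coeff (x.1 / p) a * coeff (x.2 / p) b else 0 := by
    intro x _
    rw [coeff_T, coeff_T]
    split_ifs with h1 h2 h3 h4 <;> simp_all
  have h1 : coeff n (T p a * T p b) = ∑ x ∈ (antidiagonal n).filter
      (fun x => p ∣ x.1 ∧ p ∣ x.2), coeff (x.1 / p) a * coeff (x.2 / p) b := by
    rw [coeff_mul, Finset.sum_congr rfl hsum, Finset.sum_ite, Finset.sum_const_zero, add_zero]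
  rw [coeff_T, h1]
  by_cases hn : p ∣ n
  · rw [if_pos hn, coeff_mul]
    refine Finset.sum_nbij' (fun y => (p * y.1, p * y.2)) (fun x => (x.1 / p, x.2 / p))
      ?_ ?_ ?_ ?_ ?_
    · rintro ⟨y1, y2⟩ hy
      simp only [Finset.HasAntidiagonal.mem_antidiagonal] at hy
      simp only [Finset.mem_filter, Finset.HasAntidiagonal.mem_antidiagonal]
      refine ⟨?_, Dvd.intro _ rfl, Dvd.intro _ rfl⟩
      rw [← Nat.mul_add, hy, Nat.mul_div_cancel' hn]
    · rintro ⟨x1, x2⟩ hx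
      simp only [Finset.mem_filter, Finset.HasAntidiagonal.mem_antidiagonal] at hx
      obtain ⟨hs, hd1, hd2⟩ := hx
      obtain ⟨A, rfl⟩ := hd1
      obtain ⟨B, rfl⟩ := hd2
      simp only [Finset.HasAntidiagonal.mem_antidiagonal, Nat.mul_div_cancel_left _ hp]
      rw [← Nat.mul_add] at hs
      subst hs
      rw [Nat.mul_div_cancel_left _ hp]
    · rintro ⟨y1, y2⟩ _
      simp [Nat.mul_div_cancel_left _ hp]
    · rintro ⟨x1, x2⟩ hx
      simp only [Finset.mem_filter, Finset.HasAntidiagonal.mem_antidiagonal] at hx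
      simp [Nat.mul_div_cancel' hx.2.1, Nat.mul_div_cancel' hx.2.2]
    · rintro ⟨y1, y2⟩ _
      simp [Nat.mul_div_cancel_left _ hp]
  · rw [if_neg hn]
    refine (Finset.sum_eq_zero ?_).symm
    rintro ⟨x1, x2⟩ hx
    simp only [Finset.mem_filter, Finset.HasAntidiagonal.mem_antidiagonal] at hx
    exact absurd (hx.1 ▸ dvd_add hx.2.1 hx.2.2) hn

lemma coeff_X_mul_derivative (w : R⟦X⟧) (n : ℕ) :
    coeff n (X * derivative R w) = n * coeff n w := by
  cases n with
  | zero => simp [coeff_zero_eq_constantCoeff, map_mul]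
  | succ n => rw [coeff_succ_X_mul, coeff_derivative, mul_comm]; push_cast; ring

lemma X_mul_derivative_T (p : ℕ) (hp : 0 < p) (f : R⟦X⟧) :
    X * derivative R (T p f) = (p : R⟦X⟧) * T p (X * derivative R f) := by
  ext n
  rw [coeff_X_mul_derivative]
  have : (p : R⟦X⟧) = C (p : R) := by push_cast; rfl
  rw [this, coeff_C_mul, coeff_T]
  by_cases hn : p ∣ n
  · rw [if_pos hn, coeff_T, if_pos hn, coeff_X_mul_derivative, ← mul_assoc]
    congr 2
    rw [← Nat.cast_mul, Nat.mul_div_cancel' hn]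
  · rw [if_neg hn, coeff_T, if_neg hn, mul_zero, mul_zero]

section LogDeriv

variable [IsDomain R]

/-- Logarithmic derivative times X. -/
def ell (f : R⟦X⟧) : R⟦X⟧ := X * derivative R f * invOfUnit f 1

lemma ne_zero_of_const_one {f : R⟦X⟧} (hf : constantCoeff f = 1) : f ≠ 0 := by
  intro h0
  rw [h0, map_zero] at hf
  exact zero_ne_one hf

lemma ell_spec {f : R⟦X⟧} (hf : constantCoeff f = 1) :
    ell f * f = X * derivative R f := by
  rw [ell, mul_assoc, invOfUnit_mul f 1 (by rw [hf, Units.val_one]), mul_one]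

lemma ell_unique {f a : R⟦X⟧} (hf : constantCoeff f = 1)
    (h : a * f = X * derivative R f) : a = ell f :=
  mul_right_cancel₀ (ne_zero_of_const_one hf) (h.trans (ell_spec hf).symm)

lemma constantCoeff_invOfUnit_one {f : R⟦X⟧} :
    constantCoeff (invOfUnit f 1) = 1 := by
  rw [constantCoeff_invOfUnit, inv_one, Units.val_one]

lemma ell_one : ell (1 : R⟦X⟧) = 0 := by
  simp [ell]

lemma ell_mul {f g : R⟦X⟧} (hf : constantCoeff f = 1) (hg : constantCoeff g = 1) :
    ell (f * g) = ell f + ell g := by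
  have hfg : constantCoeff (f * g) = 1 := by rw [map_mul, hf, hg, one_mul]
  refine (ell_unique hfg ?_).symm
  calc (ell f + ell g) * (f * g) = (ell f * f) * g + (ell g * g) * f := by ring
    _ = (X * derivative R f) * g + (X * derivative R g) * f := by
        rw [ell_spec hf, ell_spec hg]
    _ = X * derivative R (f * g) := by
        rw [Derivation.leibniz]
        simp only [smul_eq_mul]
        ring

lemma ell_pow {f : R⟦X⟧} (hf : constantCoeff f = 1) (m : ℕ) :
    ell (f ^ m) = (m : R⟦X⟧) * ell f := by
  induction m with
  | zero => simp [ell_one]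
  | succ m ih =>
      have hfm : constantCoeff (f ^ m) = 1 := by rw [map_pow, hf, one_pow]
      rw [pow_succ, ell_mul hfm hf, ih]
      push_cast
      ring

lemma ell_invOfUnit {f : R⟦X⟧} (hf : constantCoeff f = 1) :
    ell (invOfUnit f 1) = - ell f := by
  have h := ell_mul hf (constantCoeff_invOfUnit_one (f := f))
  rw [mul_invOfUnit f 1 (by rw [hf, Units.val_one]), ell_one] at h
  linear_combination -h

end LogDeriv

section Frobenius

variable {p : ℕ} [Fact p.Prime]

lemma pow_char_eq_T (F : PowerSeries (ZMod p)) : F ^ p = T p F := by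
  have hp : 0 < p := (Fact.out : p.Prime).pos
  ext n
  set t : Polynomial (ZMod p) := trunc (n + 1) F with ht
  have hd : (X : PowerSeries (ZMod p)) ^ (n + 1) ∣ F - ↑t := by
    rw [X_pow_dvd_iff]
    intro m hm
    rw [map_sub, Polynomial.coeff_coe, ht, coeff_trunc, if_pos hm, sub_self]
  have hd2 : (X : PowerSeries (ZMod p)) ^ (n + 1) ∣ F ^ p - (↑t) ^ p :=
    hd.trans (sub_dvd_pow_sub_pow F (↑t) p)
  have h1 : coeff n (F ^ p) = coeff n ((↑t : PowerSeries (ZMod p)) ^ p) := by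
    have := (X_pow_dvd_iff.mp hd2) n (lt_add_one n)
    rw [map_sub, sub_eq_zero] at this
    exact this
  have h2 : t ^ p = Polynomial.expand (ZMod p) p t := by
    have h3 := Polynomial.map_frobenius_expand p t
    have h4 : (Polynomial.expand (ZMod p) p t).map (frobenius (ZMod p) p)
        = Polynomial.expand (ZMod p) p t := by
      ext m
      rw [Polynomial.coeff_map, frobenius_def, ZMod.pow_card]
    rw [h4] at h3
    exact h3.symm
  rw [h1, ← Polynomial.coe_pow, Polynomial.coeff_coe, h2,
    Polynomial.coeff_expand hp, coeff_T]
  split_ifs with h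
  · rw [ht, coeff_trunc, if_pos (Nat.lt_succ_of_le (Nat.div_le_self n p))]
  · rfl

end Frobenius

section Padic

variable {p : ℕ} [hp : Fact p.Prime]

lemma dvd_iff_toZMod_eq_zero (z : ℤ_[p]) : (p : ℤ_[p]) ∣ z ↔ PadicInt.toZMod z = 0 := by
  rw [← RingHom.mem_ker, PadicInt.ker_toZMod, PadicInt.maximalIdeal_eq_span_p,
    Ideal.mem_span_singleton]

lemma isUnit_natCast_of_not_dvd {q : ℕ} (hq : ¬ p ∣ q) : IsUnit (q : ℤ_[p]) := by
  by_contra h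
  rw [PadicInt.not_isUnit_iff] at h
  rw [show ((q : ℕ) : ℤ_[p]) = ((q : ℤ) : ℤ_[p]) by push_cast; rfl,
    PadicInt.norm_int_lt_one_iff_dvd] at h
  exact hq (Int.natCast_dvd_natCast.mp h)

lemma pow_dvd_coeff_pow {u : PowerSeries ℤ_[p]} (hu : ∀ i, (p : ℤ_[p]) ∣ coeff i u) :
    ∀ (j n : ℕ), (p : ℤ_[p]) ^ (j + 1) ∣ coeff n (u ^ (j + 1)) := by
  intro j
  induction j with
  | zero => intro n; simpa using hu n
  | succ j ih =>
      intro n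
      rw [show u ^ (j + 1 + 1) = u ^ (j + 1) * u from pow_succ u (j + 1), coeff_mul]
      refine Finset.dvd_sum fun x _ => ?_
      rw [pow_succ]
      exact mul_dvd_mul (ih x.1) (hu x.2)

lemma pnz : (p : ℤ_[p]) ≠ 0 := Nat.cast_ne_zero.mpr (Fact.out : p.Prime).pos.ne'

/-- Key divisibility: each term of the expansion of the log derivative of `1 + w`
is divisible by `p ^ (v_p n + 1)`. -/
lemma term_dvd {w : PowerSeries ℤ_[p]} (hw : ∀ i, (p : ℤ_[p]) ∣ coeff i w)
    (n m : ℕ) (hn : n ≠ 0) :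
    (p : ℤ_[p]) ^ (n.factorization p + 1) ∣
      coeff n (X * derivative ℤ_[p] w * w ^ m) := by
  set A := coeff n (X * derivative ℤ_[p] w * w ^ m) with hA
  have key : ((m + 1 : ℕ) : ℤ_[p]) * A = (n : ℤ_[p]) * coeff n (w ^ (m + 1)) := by
    have h1 := coeff_X_mul_derivative (w ^ (m + 1)) n
    rw [Derivation.leibniz_pow, Nat.add_sub_cancel, mul_smul_comm, mul_smul_comm,
      map_nsmul, smul_eq_mul] at h1
    rw [← h1, hA]
    push_cast
    ring_nf
  set v := n.factorization p with hv
  set t := (m + 1).factorization p with htdef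
  set q := (m + 1) / p ^ t with hqdef
  have hfact : p ^ t * q = m + 1 := Nat.ordProj_mul_ordCompl_eq_self (m + 1) p
  have hq : ¬ p ∣ q := Nat.not_dvd_ordCompl (Fact.out : p.Prime) (Nat.succ_ne_zero m)
  have htm : t ≤ m := by
    have h2 : p ^ t ≤ m + 1 := Nat.le_of_dvd (Nat.succ_pos m) (Nat.ordProj_dvd (m + 1) p)
    have h3 : t < p ^ t := Nat.lt_pow_self (n := t) (Fact.out : p.Prime).one_lt
    omega
  obtain ⟨n', hn'⟩ : (p : ℤ_[p]) ^ v ∣ (n : ℤ_[p]) := by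
    have := Nat.ordProj_dvd n p
    exact_mod_cast Nat.cast_dvd_cast (α := ℤ_[p]) this
  obtain ⟨C, hC⟩ := pow_dvd_coeff_pow hw m n
  have hcancel : (q : ℤ_[p]) * A = (p : ℤ_[p]) ^ (v + 1) * ((p : ℤ_[p]) ^ (m - t) * n' * C) := by
    have hptnz : ((p : ℤ_[p]) ^ t) ≠ 0 := pow_ne_zero t pnz
    apply mul_left_cancel₀ hptnz
    have hcast : ((m + 1 : ℕ) : ℤ_[p]) = (p : ℤ_[p]) ^ t * (q : ℤ_[p]) := by
      rw [← hfact]; push_cast; ring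
    have hexp : (p : ℤ_[p]) ^ v * (p : ℤ_[p]) ^ (m + 1)
        = (p : ℤ_[p]) ^ t * ((p : ℤ_[p]) ^ (v + 1) * (p : ℤ_[p]) ^ (m - t)) := by
      rw [← pow_add, ← pow_add, ← pow_add]
      congr 1
      omega
    calc (p : ℤ_[p]) ^ t * ((q : ℤ_[p]) * A) = ((m + 1 : ℕ) : ℤ_[p]) * A := by
          rw [hcast]; ring
      _ = (p : ℤ_[p]) ^ v * n' * ((p : ℤ_[p]) ^ (m + 1) * C) := by rw [key, hn', hC]
      _ = ((p : ℤ_[p]) ^ v * (p : ℤ_[p]) ^ (m + 1)) * (n' * C) := by ring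
      _ = (p : ℤ_[p]) ^ t * ((p : ℤ_[p]) ^ (v + 1) * ((p : ℤ_[p]) ^ (m - t) * n' * C)) := by
          rw [hexp]; ring
  have hunit : IsUnit (q : ℤ_[p]) := isUnit_natCast_of_not_dvd hq
  have hdvdqA : (p : ℤ_[p]) ^ (v + 1) ∣ (q : ℤ_[p]) * A := ⟨_, hcancel⟩
  exact (IsUnit.dvd_mul_left hunit).mp hdvdqA

/-- Main analytic lemma: if `g ≡ 1 mod p` then `p^(v_p n + 1) ∣ coeff n (ell g)`. -/
lemma ell_coeff_dvd {g : PowerSeries ℤ_[p]} (hg0 : constantCoeff g = 1)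
    (hg : ∀ i, 1 ≤ i → (p : ℤ_[p]) ∣ coeff i g) (n : ℕ) (hn : n ≠ 0) :
    (p : ℤ_[p]) ^ (n.factorization p + 1) ∣ coeff n (ell g) := by
  set u := g - 1 with hu
  have hucoeff : ∀ i, (p : ℤ_[p]) ∣ coeff i u := by
    intro i
    rcases Nat.eq_zero_or_pos i with rfl | hi
    · rw [hu, map_sub, coeff_zero_eq_constantCoeff, hg0, map_one, sub_self]
      exact dvd_zero _
    · rw [hu, map_sub, coeff_one, if_neg hi.ne', sub_zero]
      exact hg i hi
  have hXu : (X : PowerSeries ℤ_[p]) ∣ u := by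
    rw [X_dvd_iff, hu, map_sub, hg0, map_one, sub_self]
  have hderiv : derivative ℤ_[p] g = derivative ℤ_[p] u := by
    rw [hu, map_sub, Derivation.map_one_eq_zero, sub_zero]
  set S : PowerSeries ℤ_[p] := ∑ m ∈ Finset.range (n + 1), (-u) ^ m with hS
  have hgS : S * g = 1 - (-u) ^ (n + 1) := by
    have := geom_sum_mul (-u) (n + 1)
    have hgu : g = u + 1 := by rw [hu]; ring
    rw [hgu]
    linear_combination -this
  have hell : ell g = X * derivative ℤ_[p] u * S
      + X * derivative ℤ_[p] u * (-u) ^ (n + 1) * invOfUnit g 1 := by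
    refine (ell_unique hg0 ?_).symm
    have hinv : invOfUnit g 1 * g = 1 := invOfUnit_mul g 1 (by rw [hg0, Units.val_one])
    calc (X * derivative ℤ_[p] u * S + X * derivative ℤ_[p] u * (-u) ^ (n + 1)
          * invOfUnit g 1) * g
        = X * derivative ℤ_[p] u * (S * g)
          + X * derivative ℤ_[p] u * (-u) ^ (n + 1) * (invOfUnit g 1 * g) := by ring
      _ = X * derivative ℤ_[p] u * (1 - (-u) ^ (n + 1))
          + X * derivative ℤ_[p] u * (-u) ^ (n + 1) * 1 := by rw [hgS, hinv]
      _ = X * derivative ℤ_[p] g := by rw [hderiv]; ring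
  have hzero : coeff n (X * derivative ℤ_[p] u * (-u) ^ (n + 1) * invOfUnit g 1) = 0 := by
    have hdvd : (X : PowerSeries ℤ_[p]) ^ (n + 1)
        ∣ X * derivative ℤ_[p] u * (-u) ^ (n + 1) * invOfUnit g 1 := by
      have : (X : PowerSeries ℤ_[p]) ^ (n + 1) ∣ (-u) ^ (n + 1) :=
        pow_dvd_pow_of_dvd (Dvd.dvd.neg_right hXu) (n + 1)
      exact ((this.mul_left _).mul_right _)
    exact X_pow_dvd_iff.mp hdvd n (lt_add_one n)
  rw [hell, map_add, hzero, add_zero, hS, Finset.mul_sum, map_sum]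
  refine Finset.dvd_sum fun m _ => ?_
  have hterm : X * derivative ℤ_[p] u * (-u) ^ m
      = -(X * derivative ℤ_[p] (-u) * (-u) ^ m) := by
    rw [map_neg]
    ring
  rw [hterm, map_neg]
  refine Dvd.dvd.neg_right ?_
  refine term_dvd (fun i => ?_) n m hn
  rw [map_neg]
  exact (hucoeff i).neg_right

end Padic

end

end Stmt1Aux

open Stmt1Aux

/-- If `f ∈ ℤ_p[[x]]` has `f(0) = 1` and we write `x f'(x)/f(x) = ∑ c_n x^n`, then all `c_n`
lie in `ℤ_p` (expressed as: there is a sequence `c : ℕ → ℤ_p` with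
`x·f' = (∑ c_n x^n)·f`), and `c_{k p^{r+1}} ≡ c_{k p^r} (mod p^{r+1})` for all `k, r`. -/
theorem stmt_1 (p : ℕ) [Fact p.Prime] (f : PowerSeries ℤ_[p])
    (hf : constantCoeff f = 1) :
    ∃ c : ℕ → ℤ_[p],
      X * PowerSeries.derivative ℤ_[p] f = PowerSeries.mk c * f ∧
      ∀ k r : ℕ, (p : ℤ_[p]) ^ (r + 1) ∣ c (k * p ^ (r + 1)) - c (k * p ^ r) := by
  have hpp : p.Prime := Fact.out
  set c : ℕ → ℤ_[p] := fun n => coeff n (ell f) with hc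
  refine ⟨c, ?_, ?_⟩
  · have hmk : PowerSeries.mk c = ell f := by
      ext n; rw [coeff_mk]
    rw [hmk]
    exact (ell_spec hf).symm
  · intro k r
    rcases Nat.eq_zero_or_pos k with rfl | hk
    · simp
    have hk0 : k ≠ 0 := hk.ne'
    have hpne : (p : ℕ) ≠ 0 := hpp.pos.ne'
    -- setup
    have hTf : constantCoeff (T p f) = 1 := (constantCoeff_T p f).trans hf
    have hfrob : PowerSeries.map (PadicInt.toZMod (p := p)) (f ^ p)
        = PowerSeries.map PadicInt.toZMod (T p f) := by
      rw [map_pow, pow_char_eq_T, T_map]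
    set g : PowerSeries ℤ_[p] := f ^ p * invOfUnit (T p f) 1 with hg
    have hfp1 : constantCoeff (f ^ p) = 1 := by rw [map_pow, hf, one_pow]
    have hg0 : constantCoeff g = 1 := by
      rw [hg, map_mul, hfp1, constantCoeff_invOfUnit_one, mul_one]
    have hgTf : g * T p f = f ^ p := by
      rw [hg, mul_assoc, invOfUnit_mul (T p f) 1 (by rw [hTf, Units.val_one]), mul_one]
    have hmapg : PowerSeries.map (PadicInt.toZMod (p := p)) g = 1 := by
      have hTfne : PowerSeries.map (PadicInt.toZMod (p := p)) (T p f) ≠ 0 := by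
        intro h0
        have : PadicInt.toZMod (coeff 0 (T p f)) = 0 := by
          rw [← coeff_map, h0, map_zero]
        rw [coeff_zero_eq_constantCoeff_apply, hTf, map_one] at this
        exact one_ne_zero this
      apply mul_right_cancel₀ hTfne
      rw [← map_mul, hgTf, hfrob, one_mul]
    have hgc : ∀ i, 1 ≤ i → (p : ℤ_[p]) ∣ coeff i g := by
      intro i hi
      rw [dvd_iff_toZMod_eq_zero]
      have : coeff i (PowerSeries.map (PadicInt.toZMod (p := p)) g)
          = PadicInt.toZMod (coeff i g) := coeff_map _ _ _
      rw [hmapg, coeff_one, if_neg (Nat.one_le_iff_ne_zero.mp hi)] at this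
      exact this.symm
    have hellTf : ell (T p f) = (p : PowerSeries ℤ_[p]) * T p (ell f) := by
      refine (ell_unique hTf ?_).symm
      rw [X_mul_derivative_T p hpp.pos f, ← ell_spec hf, T_mul p hpp.pos]
      ring
    have hellg : ell g = (p : PowerSeries ℤ_[p]) * ell f
        - (p : PowerSeries ℤ_[p]) * T p (ell f) := by
      rw [hg, ell_mul hfp1 constantCoeff_invOfUnit_one, ell_pow hf p,
        ell_invOfUnit hTf, hellTf]
      push_cast
      ring
    -- the congruence
    set n := k * p ^ (r + 1) with hndef
    have hn0 : n ≠ 0 := Nat.mul_ne_zero hk0 (pow_ne_zero _ hpne)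
    have hneq : n = (k * p ^ r) * p := by rw [hndef, pow_succ]; ring
    have hnp : p ∣ n := ⟨k * p ^ r, by rw [hneq]; ring⟩
    have hndiv : n / p = k * p ^ r := by rw [hneq, Nat.mul_div_cancel _ hpp.pos]
    have hCcast : (p : PowerSeries ℤ_[p]) = C (p : ℤ_[p]) := by
      rw [map_natCast]
    have hcoeffg : coeff n (ell g) = (p : ℤ_[p]) * (c n - c (k * p ^ r)) := by
      rw [hellg, map_sub, hCcast, coeff_C_mul, coeff_C_mul, coeff_T, if_pos hnp, hndiv]
      ring
    have hdvd := ell_coeff_dvd hg0 hgc n hn0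
    rw [hcoeffg, pow_succ'] at hdvd
    have hvr : r + 1 ≤ n.factorization p := by
      have : n.factorization p = k.factorization p + (r + 1) := by
        rw [hndef, Nat.factorization_mul hk0 (pow_ne_zero _ hpne), hpp.factorization_pow]
        simp
      omega
    have hstep : (p : ℤ_[p]) ^ (n.factorization p) ∣ c n - c (k * p ^ r) :=
      (mul_dvd_mul_iff_left pnz).mp hdvd
    exact dvd_trans (pow_dvd_pow _ hvr) hstep
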